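/- Suppose 1 ≤ k ≤ n(q-1)/2 and 2k ≡ 0 (mod q-1). Then C_{n,k}^q ⊆ C_{n,n(q-1)-k}^q: every evaluation vector of a homogeneous polynomial of degree k on P' is also the evaluation vector of some homogeneous polynomial of degree n(q-1)-k on P'. -/

import Mathlib

open scoped BigOperators

/-- A vector in `F^(n+1)` is a standard representative if its leftmost nonzero
coordinate equals `1`. -/
def IsStdRep {F : Type*} [Field F] {n : ℕ} (v : Fin (n + 1) → F) : Prop :=
  ∃ i, (∀ j, j < i → v j = 0) ∧ v i = 1

/-- The set of standard affine representatives of the points of projective n-space. -/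
abbrev ProjPts (F : Type*) [Field F] (n : ℕ) : Type _ :=
  {v : Fin (n + 1) → F // IsStdRep v}

noncomputable instance {F : Type*} [Field F] [Fintype F] {n : ℕ} :
    Fintype (ProjPts F n) := Fintype.ofFinite _

/-- Evaluation of a polynomial at the standard representatives, as a linear map. -/
noncomputable def evalOnPts (F : Type*) [Field F] [Fintype F] (n : ℕ) :
    MvPolynomial (Fin (n + 1)) F →ₗ[F] (ProjPts F n → F) where
  toFun f := fun p => MvPolynomial.eval p.1 f
  map_add' f g := by ext p; simp
  map_smul' c f := by ext p; simp [MvPolynomial.smul_eval]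

/-- The projective Reed–Muller code `C_{n,k}^q`: evaluations of homogeneous degree-`k`
polynomials at the standard representatives of the points of `ℙ^n(F)`. -/
noncomputable def PRM (F : Type*) [Field F] [Fintype F] (n k : ℕ) :
    Submodule F (ProjPts F n → F) :=
  Submodule.map (evalOnPts F n) (MvPolynomial.homogeneousSubmodule (Fin (n + 1)) F k)

/-- The dual code with respect to the standard bilinear form. -/
noncomputable def dualCode {F : Type*} [Field F] [Fintype F] {n : ℕ}
    (C : Submodule F (ProjPts F n → F)) : Submodule F (ProjPts F n → F) where
  carrier := {y | ∀ c ∈ C, ∑ p : ProjPts F n, y p * c p = 0}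
  zero_mem' := by intro c hc; simp
  add_mem' := by
    intro a b ha hb c hc
    show ∑ p : ProjPts F n, (a + b) p * c p = 0
    simp only [Pi.add_apply, add_mul, Finset.sum_add_distrib, ha c hc, hb c hc, add_zero]
  smul_mem' := by
    intro r a ha c hc
    show ∑ p : ProjPts F n, (r • a) p * c p = 0
    simp only [Pi.smul_apply, smul_eq_mul, mul_assoc, ← Finset.mul_sum, ha c hc, mul_zero]

lemma pow_key {F : Type*} [Field F] [Fintype F] (x : F) (e c : ℕ) (he : 1 ≤ e) :
    x ^ (e + c * (Fintype.card F - 1)) = x ^ e := by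
  rcases eq_or_ne x 0 with rfl | hx
  · rw [zero_pow (by omega), zero_pow (by omega)]
  · rw [pow_add, pow_mul', FiniteField.pow_card_sub_one_eq_one x hx, one_pow, mul_one]

theorem stmt11 (q n : ℕ) (F : Type*) [Field F] [Fintype F] [DecidableEq F]
    (hq : Fintype.card F = q) (hn : 1 ≤ n) (k : ℕ) (hk1 : 1 ≤ k) (hk2 : 2 * k ≤ n * (q - 1))
    (hkd : (q - 1) ∣ 2 * k) :
    PRM F n k ≤ PRM F n (n * (q - 1) - k) := by
  have hq2 : 2 ≤ q := hq ▸ Fintype.one_lt_card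
  obtain ⟨c, hc⟩ : (q - 1) ∣ (n * (q - 1) - 2 * k) := by
    obtain ⟨m, hm⟩ := hkd
    exact ⟨n - m, by rw [mul_comm (q-1) (n-m), tsub_mul, mul_comm m (q-1), ← hm]⟩
  set d : ℕ := n * (q - 1) - 2 * k with hd
  rintro y ⟨f, hf, rfl⟩
  rw [show f = ∑ a ∈ f.support, MvPolynomial.monomial a (f.coeff a) from
    (MvPolynomial.support_sum_monomial_coeff f).symm, map_sum]
  apply Submodule.sum_mem
  intro a ha
  have hadeg : a.degree = k := by
    have := hf (MvPolynomial.mem_support_iff.mp ha)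
    rw [Finsupp.degree_eq_weight_one]; exact this
  obtain ⟨i, hi⟩ : ∃ i, 1 ≤ a i := by
    by_contra h
    push_neg at h
    have : a.degree = 0 := Finset.sum_eq_zero fun j _ => by have := h j; omega
    omega
  refine ⟨MvPolynomial.monomial (a + Finsupp.single i d) (f.coeff a), ?_, ?_⟩
  · apply MvPolynomial.isHomogeneous_monomial
    simp only [Finsupp.degree_eq_weight_one, map_add] at hadeg ⊢
    rw [hadeg]
    have : (Finsupp.weight 1) (Finsupp.single i d) = d := by
      rw [Finsupp.weight_apply, Finsupp.sum_single_index] <;> simp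
    rw [show (Finsupp.weight fun _ => 1) (Finsupp.single i d) = d from this]; omega
  · ext p
    simp only [evalOnPts, LinearMap.coe_mk, AddHom.coe_mk, MvPolynomial.eval_monomial]
    congr 1
    rw [Finsupp.prod_fintype _ _ (fun j => pow_zero _),
        Finsupp.prod_fintype _ _ (fun j => pow_zero _)]
    apply Finset.prod_congr rfl
    intro j _
    rcases eq_or_ne j i with rfl | hji
    · simp only [Finsupp.add_apply, Finsupp.single_eq_same]
      rw [hc, mul_comm (q-1) c, ← hq]
      exact pow_key _ _ _ hi
    · simp [Finsupp.single_eq_of_ne' (Ne.symm hji)]
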